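/- For a 3×3 matrix A over an arbitrary ring R, the symmetric Newton trace formula holds: sdet(A) = tr(A)³ − tr(A)·tr(A²) − tr(A·tr(A)·A) − tr(A²)·tr(A) + tr(A³) + tr((Aᵀ)³), where Aᵀ is the transpose of A. -/

import Mathlib

open Matrix Polynomial

/-- The symmetric determinant of a square matrix over a possibly noncommutative ring:
`sdet A = Σ_{α,β ∈ S_n} sgn α · sgn β · a_{α 1, β 1} ⋯ a_{α n, β n}` (ordered product). -/
def sdet {R : Type*} [Ring R] {n : ℕ} (A : Matrix (Fin n) (Fin n) R) : R :=
  ∑ α : Equiv.Perm (Fin n), ∑ β : Equiv.Perm (Fin n),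
    ((Equiv.Perm.sign α : ℤ) * (Equiv.Perm.sign β : ℤ)) •
      (List.ofFn fun i : Fin n => A (α i) (β i)).prod

/-- The preadjoint matrix `A*`: its `(r,s)` entry is the sum over `α, β ∈ S_n`
with `α s = s` and `β s = r` of `sgn α · sgn β` times the ordered product of the
entries `a_{α i, β i}` for `i ≠ s`. -/
def preadj {R : Type*} [Ring R] {n : ℕ} (A : Matrix (Fin n) (Fin n) R) :
    Matrix (Fin n) (Fin n) R :=
  fun r s =>
    ∑ α ∈ Finset.univ.filter (fun α : Equiv.Perm (Fin n) => α s = s),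
      ∑ β ∈ Finset.univ.filter (fun β : Equiv.Perm (Fin n) => β s = r),
        ((Equiv.Perm.sign α : ℤ) * (Equiv.Perm.sign β : ℤ)) •
          (((List.finRange n).filter (fun i => i ≠ s)).map fun i => A (α i) (β i)).prod


private lemma perm3_univ : (Finset.univ : Finset (Equiv.Perm (Fin 3))) =
    {1, Equiv.swap 0 1, Equiv.swap 0 2, Equiv.swap 1 2,
     Equiv.swap 0 1 * Equiv.swap 1 2, Equiv.swap 1 2 * Equiv.swap 0 1} := by decide

private lemma perm3_sum {R : Type*} [Ring R] (f : Equiv.Perm (Fin 3) → R) :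
    ∑ σ : Equiv.Perm (Fin 3), f σ =
      f 1 + f (Equiv.swap 0 1) + f (Equiv.swap 0 2) + f (Equiv.swap 1 2) +
      f (Equiv.swap 0 1 * Equiv.swap 1 2) + f (Equiv.swap 1 2 * Equiv.swap 0 1) := by
  rw [perm3_univ]
  repeat rw [Finset.sum_insert (by decide)]
  rw [Finset.sum_singleton]
  try ring_nf
  abel


private lemma s01 : ((Equiv.Perm.sign (Equiv.swap (0:Fin 3) 1) : ℤ)) = -1 := by decide
private lemma s02 : ((Equiv.Perm.sign (Equiv.swap (0:Fin 3) 2) : ℤ)) = -1 := by decide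
private lemma s12 : ((Equiv.Perm.sign (Equiv.swap (1:Fin 3) 2) : ℤ)) = -1 := by decide
private lemma sc1 : ((Equiv.Perm.sign (Equiv.swap (0:Fin 3) 1 * Equiv.swap 1 2) : ℤ)) = 1 := by decide
private lemma sc2 : ((Equiv.Perm.sign (Equiv.swap (1:Fin 3) 2 * Equiv.swap 0 1) : ℤ)) = 1 := by decide

theorem sdet3_newton {R : Type*} [Ring R] (A : Matrix (Fin 3) (Fin 3) R) :
    sdet A =
      Matrix.trace A ^ 3 - Matrix.trace A * Matrix.trace (A * A) -
        Matrix.trace (A * Matrix.scalar (Fin 3) (Matrix.trace A) * A) -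
        Matrix.trace (A * A) * Matrix.trace A +
        Matrix.trace (A * A * A) + Matrix.trace (Aᵀ * Aᵀ * Aᵀ) := by
  rw [sdet]
  simp only [perm3_sum, Matrix.trace, Matrix.diag, Matrix.mul_apply, Matrix.transpose_apply,
    Matrix.scalar_apply, Matrix.diagonal, Matrix.of_apply, Fin.sum_univ_three, Fin.isValue,
    List.ofFn_succ, List.ofFn_zero, List.prod_cons, List.prod_nil, mul_one,
    Equiv.Perm.sign_one, s01, s02, s12, sc1, sc2,
    Equiv.Perm.one_apply, Equiv.Perm.mul_apply, Equiv.swap_apply_def,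
    Units.val_one]
  norm_num [Fin.ext_iff]
  noncomm_ring
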